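/- Let B be an order-convex subset of ∂([0,k₁]×⋯×[0,kₙ]) \ {(k₁,…,kₙ)} containing (0,…,0), where ∂ denotes the topological boundary of the box, i.e., the complement of the open box ]0,k₁[×⋯×]0,kₙ[. Then B is contractible. -/
import Mathlib

open Set

/-- The maximum of the ratios `(k i - x i) / k i`. -/
noncomputable def obcM {n : ℕ} [NeZero n] (k x : Fin n → ℝ) : ℝ :=
  Finset.univ.sup' Finset.univ_nonempty fun i => (k i - x i) / k i

/-- The contraction map: two phases, first slide towards the "lower" faces along
the line through the corner `k`, then scale linearly to `0`. -/
noncomputable def obcZ {n : ℕ} [NeZero n] (k : Fin n → ℝ) (t : ℝ) (x : Fin n → ℝ) :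
    Fin n → ℝ :=
  fun i => (1 - max (2 * t - 1) 0) *
    (k i - (1 + min (2 * t) 1 * ((obcM k x)⁻¹ - 1)) * (k i - x i))

/-- Let `B` be an order-convex subset of
`∂([0,k₁]×⋯×[0,kₙ]) \ {(k₁,…,kₙ)}` containing `(0,…,0)`, where the boundary of
the box is its complement of the open box `]0,k₁[×⋯×]0,kₙ[` in the closed box
(componentwise order on `ℝⁿ`, `kᵢ ≥ 1`). Then `B` is contractible. -/
theorem orderConvex_boundary_contractible (n : ℕ) (k : Fin n → ℝ)
    (hk : ∀ i, 1 ≤ k i) (B : Set (Fin n → ℝ))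
    (hBamb : B ⊆ (Set.Icc (0 : Fin n → ℝ) k \ {x | ∀ i, x i ∈ Set.Ioo 0 (k i)}) \ {k})
    (hconv : ∀ x ∈ B, ∀ y ∈ B,
      ∀ z ∈ (Set.Icc (0 : Fin n → ℝ) k \ {x | ∀ i, x i ∈ Set.Ioo 0 (k i)}) \ {k},
      y ≤ z → z ≤ x → z ∈ B)
    (h0 : (0 : Fin n → ℝ) ∈ B) :
    ContractibleSpace B := by
  obtain _ | n := n
  · exact absurd (fun i => i.elim0) (hBamb h0).1.2
  haveI : NeZero (n + 1) := ⟨n.succ_ne_zero⟩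
  have hk0 : ∀ i, (0 : ℝ) < k i := fun i => lt_of_lt_of_le one_pos (hk i)
  -- basic facts about `obcM`
  have hr : ∀ (x : Fin (n+1) → ℝ) i, (k i - x i) / k i ≤ obcM k x := by
    intro x i
    unfold obcM
    exact Finset.le_sup' (fun j => (k j - x j) / k j) (Finset.mem_univ i)
  have hm1 : ∀ x ∈ B, obcM k x ≤ 1 := by
    intro x hx
    unfold obcM
    apply Finset.sup'_le
    intro i _
    have h0i : 0 ≤ x i := (hBamb hx).1.1.1 i
    rw [div_le_one (hk0 i)]
    linarith
  have hmpos : ∀ x ∈ B, 0 < obcM k x := by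
    intro x hx
    obtain ⟨⟨hIcc, _⟩, hnk⟩ := hBamb hx
    have : ∃ j, x j < k j := by
      by_contra h
      push_neg at h
      exact hnk (funext fun i => le_antisymm (hIcc.2 i) (h i))
    obtain ⟨j, hj⟩ := this
    have : 0 < (k j - x j) / k j := div_pos (by linarith) (hk0 j)
    exact lt_of_lt_of_le this (hr x j)
  -- the key membership property
  have hmemB : ∀ t ∈ Set.Icc (0:ℝ) 1, ∀ x ∈ B, obcZ k t x ∈ B := by
    intro t ht x hx
    obtain ⟨⟨hIcc, hnbox⟩, hnk⟩ := hBamb hx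
    have hx0 : ∀ i, 0 ≤ x i := fun i => hIcc.1 i
    have hxk : ∀ i, x i ≤ k i := fun i => hIcc.2 i
    have hmp := hmpos x hx
    have hm1' := hm1 x hx
    have hinvpos : 0 < (obcM k x)⁻¹ := inv_pos.2 hmp
    have hmul : (obcM k x)⁻¹ * obcM k x = 1 := inv_mul_cancel₀ (ne_of_gt hmp)
    have hminv : 1 ≤ (obcM k x)⁻¹ := by nlinarith
    have hs0 : 0 ≤ min (2*t) 1 := le_min (by linarith [ht.1]) zero_le_one
    have hs1 : min (2*t) 1 ≤ 1 := min_le_right _ _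
    have hc0 : 0 ≤ 1 - max (2*t-1) 0 := by
      have : max (2*t-1) 0 ≤ 1 := max_le (by linarith [ht.2]) zero_le_one
      linarith
    have hc1 : 1 - max (2*t-1) 0 ≤ 1 := by
      have := le_max_right (2*t-1) 0; linarith
    have hμ1 : 1 ≤ 1 + min (2*t) 1 * ((obcM k x)⁻¹ - 1) := by nlinarith
    have hμm : 1 + min (2*t) 1 * ((obcM k x)⁻¹ - 1) ≤ (obcM k x)⁻¹ := by nlinarith
    have hkey : ∀ i, 0 ≤ k i - (1 + min (2*t) 1 * ((obcM k x)⁻¹ - 1)) * (k i - x i) ∧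
        k i - (1 + min (2*t) 1 * ((obcM k x)⁻¹ - 1)) * (k i - x i) ≤ x i := by
      intro i
      have h1 : k i - x i ≤ obcM k x * k i := by
        have := hr x i
        rw [div_le_iff₀ (hk0 i)] at this
        linarith
      have hkx : 0 ≤ k i - x i := by linarith [hxk i]
      constructor
      · nlinarith [mul_le_mul_of_nonneg_right hμm hkx,
          mul_le_mul_of_nonneg_left h1 hinvpos.le]
      · nlinarith [mul_le_mul_of_nonneg_right hμ1 hkx]
    have hz0 : ∀ i, 0 ≤ obcZ k t x i := by
      intro i
      exact mul_nonneg hc0 (hkey i).1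
    have hzx : ∀ i, obcZ k t x i ≤ x i := by
      intro i
      have h1 := (hkey i).1
      have h2 := (hkey i).2
      calc obcZ k t x i ≤ 1 * (k i - (1 + min (2*t) 1 * ((obcM k x)⁻¹ - 1)) * (k i - x i)) :=
            mul_le_mul_of_nonneg_right hc1 h1
        _ ≤ x i := by linarith
    have hamb : obcZ k t x ∈ (Set.Icc (0 : Fin (n+1) → ℝ) k \
        {x | ∀ i, x i ∈ Set.Ioo 0 (k i)}) \ {k} := by
      refine ⟨⟨⟨fun i => hz0 i, fun i => le_trans (hzx i) (hxk i)⟩, ?_⟩, ?_⟩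
      · -- not in the open box
        intro hbox
        by_cases hhalf : 2 * t - 1 ≤ 0
        · -- first phase: the scaling constant is 1
          have hc : max (2*t-1) 0 = 0 := max_eq_right hhalf
          obtain ⟨j, hj⟩ := not_forall.mp hnbox
          rw [Set.mem_Ioo, not_and_or, not_lt, not_lt] at hj
          rcases hj with hj | hj
          · -- x j = 0 : coordinate j of z is ≤ 0
            have hxj : x j = 0 := le_antisymm hj (hx0 j)
            have : obcZ k t x j ≤ 0 := by
              apply mul_nonpos_of_nonneg_of_nonpos hc0
              have := mul_le_mul_of_nonneg_right hμ1 (by linarith [hk0 j] : 0 ≤ k j - x j)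
              linarith
            exact absurd (hbox j).1 (not_lt.mpr this)
          · -- x j = k j : coordinate j of z stays at k j
            have hxj : x j = k j := le_antisymm (hxk j) hj
            have : obcZ k t x j = k j := by
              simp only [obcZ, hc, hxj]
              ring
            exact absurd (hbox j).2 (not_lt.mpr (le_of_eq this.symm))
        · -- second phase: the slide factor is maximal, argmax coordinate is 0
          have hs : min (2*t) 1 = 1 := min_eq_right (by linarith)
          obtain ⟨j, -, hj⟩ := Finset.exists_mem_eq_sup' (Finset.univ_nonempty)
            (fun i => (k i - x i) / k i)
          have hjm : k j - x j = obcM k x * k j := by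
            have : obcM k x = (k j - x j) / k j := hj
            rw [this, div_mul_cancel₀ _ (ne_of_gt (hk0 j))]
          have : obcZ k t x j = 0 := by
            simp only [obcZ, hs, hjm]
            have : (obcM k x)⁻¹ * (obcM k x * k j) = k j := by
              rw [← mul_assoc, hmul, one_mul]
            nlinarith [this]
          exact absurd (hbox j).1 (by rw [this]; exact lt_irrefl 0)
      · -- not equal to k
        intro hzk
        apply hnk
        have hzk' : obcZ k t x = k := hzk
        funext i
        have : obcZ k t x i = k i := by rw [hzk']
        have := hzx i
        have := hxk i
        linarith [hzk' ▸ (le_of_eq (congrFun hzk' i))]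
    exact hconv x hx 0 h0 _ hamb (fun i => hz0 i) (fun i => hzx i)
  -- endpoint identities
  have hZ0 : ∀ x : Fin (n+1) → ℝ, obcZ k 0 x = x := by
    intro x
    funext i
    simp only [obcZ]
    norm_num
  have hZ1 : ∀ x : Fin (n+1) → ℝ, obcZ k 1 x = 0 := by
    intro x
    funext i
    simp only [obcZ]
    norm_num
  -- continuity
  have hmc : Continuous fun p : unitInterval × B => obcM k (p.2 : Fin (n+1) → ℝ) := by
    apply Continuous.finset_sup'_apply Finset.univ_nonempty
    intro i _
    exact (continuous_const.sub ((continuous_apply i).comp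
      (continuous_subtype_val.comp continuous_snd))).div_const _
  have hti : Continuous fun p : unitInterval × B => (p.1 : ℝ) :=
    continuous_subtype_val.comp continuous_fst
  have hmne : ∀ p : unitInterval × B, obcM k (p.2 : Fin (n+1) → ℝ) ≠ 0 :=
    fun p => ne_of_gt (hmpos _ p.2.2)
  have hcont : Continuous fun p : unitInterval × B =>
      obcZ k (p.1 : ℝ) (p.2 : Fin (n+1) → ℝ) := by
    apply continuous_pi
    intro i
    simp only [obcZ]
    have h2t : Continuous fun p : unitInterval × B => 2 * (p.1 : ℝ) :=
      continuous_const.mul hti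
    have hcc : Continuous fun p : unitInterval × B => 1 - max (2*(p.1:ℝ) - 1) 0 :=
      continuous_const.sub ((h2t.sub continuous_const).max continuous_const)
    have hinv : Continuous fun p : unitInterval × B => (obcM k (p.2 : Fin (n+1) → ℝ))⁻¹ :=
      hmc.inv₀ hmne
    have hμc : Continuous fun p : unitInterval × B =>
        1 + (min (2*(p.1:ℝ)) 1) * ((obcM k (p.2 : Fin (n+1) → ℝ))⁻¹ - 1) :=
      continuous_const.add ((h2t.min continuous_const).mul (hinv.sub continuous_const))
    have hxi : Continuous fun p : unitInterval × B => (p.2 : Fin (n+1) → ℝ) i :=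
      (continuous_apply i).comp (continuous_subtype_val.comp continuous_snd)
    exact hcc.mul (continuous_const.sub (hμc.mul (continuous_const.sub hxi)))
  rw [contractible_iff_id_nullhomotopic]
  refine ⟨⟨0, h0⟩, ⟨?_⟩⟩
  exact
    { toFun := fun p => ⟨obcZ k (p.1 : ℝ) (p.2 : Fin (n+1) → ℝ),
        hmemB _ p.1.2 _ p.2.2⟩
      continuous_toFun := hcont.subtype_mk _
      map_zero_left := fun x => Subtype.ext (hZ0 x)
      map_one_left := fun x => Subtype.ext (by simp [hZ1]) }
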